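/- Let r ≥ 1, let n_0, …, n_r ≥ 1 and let l_i ∈ (ℤ_{>0})^{n_i} for i = 0, …, r; put n = n_0 + … + n_r, let 𝔩_i denote the gcd of the entries of l_i, and let L_i ∈ ℤ^n be the vector whose i-th block equals l_i and whose other blocks are zero. Suppose v ∈ ℤ^n has all coordinates nonnegative and there exist an integer α > 0 and integers β_0, …, β_r such that α·v = β_0·L_0 + Σ_{i=1}^r β_i·(L_0 − L_i). Then there exist nonnegative integers γ_0, …, γ_r such that v = Σ_{i=0}^r γ_i · (L_i/𝔩_i), where each L_i/𝔩_i lies in ℤ^n. -/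

import Mathlib

/-- The block vector `L_i ∈ ℤ^n`, whose `i`-th block equals `l_i` and whose other
blocks vanish. -/
def blockL {r : ℕ} {n : Fin (r + 1) → ℕ} (l : (i : Fin (r + 1)) → Fin (n i) → ℕ)
    (i : Fin (r + 1)) : ((j : Fin (r + 1)) × Fin (n j)) → ℤ :=
  fun x => if x.1 = i then (l x.1 x.2 : ℤ) else 0

/-- The block vector `L_i / 𝔩_i ∈ ℤ^n`, where `𝔩_i` is the gcd of the entries of
`l_i` (it divides every entry, so the quotient vector is integral). -/
def blockLred {r : ℕ} {n : Fin (r + 1) → ℕ} (l : (i : Fin (r + 1)) → Fin (n i) → ℕ)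
    (i : Fin (r + 1)) : ((j : Fin (r + 1)) × Fin (n j)) → ℤ :=
  fun x => if x.1 = i then ((l x.1 x.2 / Finset.univ.gcd (l i) : ℕ) : ℤ) else 0

/-- Combinatorial core of the paper's Lemma 5.4: a nonnegative integral vector `v`
with `α·v = β_0 L_0 + Σ_{i=1}^r β_i (L_0 − L_i)` for some integer `α > 0` and
integers `β_i` is a nonnegative integral combination of the vectors `L_i/𝔩_i`. -/
theorem veronese_monomial_decomposition (r : ℕ) (hr : 1 ≤ r)
    (n : Fin (r + 1) → ℕ) (hn : ∀ i, 1 ≤ n i)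
    (l : (i : Fin (r + 1)) → Fin (n i) → ℕ) (hl : ∀ i j, 0 < l i j)
    (v : ((j : Fin (r + 1)) × Fin (n j)) → ℤ) (hv : ∀ x, 0 ≤ v x)
    (α : ℤ) (hα : 0 < α) (β : Fin (r + 1) → ℤ)
    (heq : α • v = β 0 • blockL l 0 +
      ∑ i ∈ Finset.univ.erase (0 : Fin (r + 1)),
        β i • (blockL l 0 - blockL l i)) :
    ∃ γ : Fin (r + 1) → ℕ, v = ∑ i, (γ i : ℤ) • blockLred l i := by
  classical
  set 𝔩 : Fin (r + 1) → ℕ := fun i => Finset.univ.gcd (l i) with h𝔩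
  have h𝔩dvd : ∀ i j, 𝔩 i ∣ l i j := fun i j => Finset.gcd_dvd (Finset.mem_univ j)
  set c : Fin (r + 1) → ℤ := fun i =>
    if i = 0 then β 0 + ∑ k ∈ Finset.univ.erase (0 : Fin (r + 1)), β k else -β i with hcdef
  have key : ∀ x : (j : Fin (r + 1)) × Fin (n j), α * v x = c x.1 * (l x.1 x.2 : ℤ) := by
    intro x
    have h := congrFun heq x
    simp only [Pi.smul_apply, smul_eq_mul, Pi.add_apply, Finset.sum_apply, Pi.sub_apply,
      blockL] at h
    by_cases hx : x.1 = 0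
    · have hsum : ∀ i ∈ Finset.univ.erase (0 : Fin (r + 1)),
          β i * ((if x.1 = 0 then (l x.1 x.2 : ℤ) else 0)
            - (if x.1 = i then (l x.1 x.2 : ℤ) else 0)) = β i * (l x.1 x.2 : ℤ) := by
        intro i hi
        rw [if_pos hx, if_neg (by
          rw [hx]; exact fun h' => (Finset.mem_erase.mp hi).1 h'.symm), sub_zero]
      rw [Finset.sum_congr rfl hsum] at h
      rw [h, if_pos hx, ← Finset.sum_mul, hcdef]
      simp only [hx, if_true, eq_self_iff_true]
      ring
    · have hsum : ∑ i ∈ Finset.univ.erase (0 : Fin (r + 1)),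
          β i * ((if x.1 = 0 then (l x.1 x.2 : ℤ) else 0)
            - (if x.1 = i then (l x.1 x.2 : ℤ) else 0))
          = β x.1 * (0 - (l x.1 x.2 : ℤ)) := by
        rw [Finset.sum_eq_single_of_mem x.1
          (Finset.mem_erase.mpr ⟨hx, Finset.mem_univ _⟩)]
        · rw [if_neg hx, if_pos rfl]
        · intro i _ hne
          rw [if_neg hx, if_neg (fun h' => hne h'.symm), sub_zero, mul_zero]
      rw [hsum, if_neg hx] at h
      rw [h, hcdef]
      simp only [hx, if_false, if_neg hx]
      ring
  have hdvdj : ∀ (i : Fin (r + 1)) (j : Fin (n i)), α ∣ c i * (l i j : ℤ) :=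
    fun i j => ⟨v ⟨i, j⟩, (key ⟨i, j⟩).symm⟩
  have hcnonneg : ∀ i, 0 ≤ c i := by
    intro i
    have j : Fin (n i) := ⟨0, hn i⟩
    have h1 : 0 ≤ c i * (l i j : ℤ) := (key ⟨i, j⟩) ▸ mul_nonneg hα.le (hv ⟨i, j⟩)
    have h2 : (0 : ℤ) < (l i j : ℤ) := by exact_mod_cast hl i j
    by_contra hcontra
    push_neg at hcontra
    exact absurd h1 (not_le.mpr (mul_neg_of_neg_of_pos hcontra h2))
  have hdvdg : ∀ i : Fin (r + 1), α ∣ c i * (𝔩 i : ℤ) := by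
    intro i
    suffices h : ∀ s : Finset (Fin (n i)), α ∣ c i * ((Finset.gcd s (l i) : ℕ) : ℤ) from h _
    intro s
    induction s using Finset.induction_on with
    | empty => simp
    | @insert j s hj ih =>
      rw [Finset.gcd_insert]
      have hgcd : (GCDMonoid.gcd (l i j) (s.gcd (l i)) : ℕ) = Nat.gcd (l i j) (s.gcd (l i)) := rfl
      rw [hgcd]
      have heqg : c i * ((Nat.gcd (l i j) (s.gcd (l i)) : ℕ) : ℤ)
          = (Int.gcd (c i * (l i j : ℤ)) (c i * ((s.gcd (l i) : ℕ) : ℤ)) : ℤ) := by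
        rw [Int.gcd_mul_left, Int.gcd_natCast_natCast]
        push_cast
        rw [abs_of_nonneg (hcnonneg i)]
      rw [heqg]
      exact Int.dvd_coe_gcd (hdvdj i j) ih
  choose q hq using hdvdg
  have hqnn : ∀ i, 0 ≤ q i := by
    intro i
    by_contra hcontra
    push_neg at hcontra
    have h1 : 0 ≤ c i * (𝔩 i : ℤ) :=
      mul_nonneg (hcnonneg i) (Int.natCast_nonneg _)
    rw [hq i] at h1
    exact absurd h1 (not_le.mpr (mul_neg_of_pos_of_neg hα hcontra))
  refine ⟨fun i => (q i).toNat, ?_⟩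
  funext x
  obtain ⟨i, j⟩ := x
  have hsum : (∑ k, (((q k).toNat : ℤ)) • blockLred l k) ⟨i, j⟩
      = ((q i).toNat : ℤ) * ((l i j / 𝔩 i : ℕ) : ℤ) := by
    simp only [Finset.sum_apply, Pi.smul_apply, smul_eq_mul, blockLred]
    rw [Finset.sum_eq_single i]
    · rw [if_pos rfl]
    · intro k _ hk
      rw [if_neg (fun h' => hk h'.symm), mul_zero]
    · intro h'
      exact absurd (Finset.mem_univ i) h'
  rw [hsum, Int.toNat_of_nonneg (hqnn i)]
  have hmul : α * (q i * ((l i j / 𝔩 i : ℕ) : ℤ)) = α * v ⟨i, j⟩ := by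
    rw [key ⟨i, j⟩, ← mul_assoc, ← hq i]
    have : ((𝔩 i : ℤ)) * ((l i j / 𝔩 i : ℕ) : ℤ) = (l i j : ℤ) := by
      rw [← Nat.cast_mul, Nat.mul_div_cancel' (h𝔩dvd i j)]
    rw [mul_assoc, this]
  exact (mul_left_cancel₀ (ne_of_gt hα) hmul).symm
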